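/- Let 0<ε₁<ε₂<ε₃ and consider the Hamiltonian circle parametrized by s ↦ Φ(s, T(s)) with T(s) = ε₁ε₃/(ε₁+ε₃−s). Then the tangent vector dΦ/ds = ∂ₛΦ + T'(s)∂ₜΦ lies in the kernel of the second fundamental form of the Fresnel surface at Φ(s,T(s)): II(1, T'(s)) = L(s,T(s)) + 2M(s,T(s))T'(s) + N(s,T(s))T'(s)² = 0, where T'(s) = ε₁ε₃/(ε₁+ε₃−s)², L = m P_L/(4t(s−ε₁)(s−ε₂)(s−ε₃)), M = m/(4t), N = m P_N/(4t²(t−ε₁)(t−ε₂)(t−ε₃)) with P_L(s,t) = s²t−2st²+(ε₁+ε₂+ε₃)t²−(ε₁ε₂+ε₁ε₃+ε₂ε₃)t+ε₁ε₂ε₃ and P_N(s,t) = −s²t²+(ε₁+ε₂+ε₃)st²−(ε₁ε₂+ε₁ε₃+ε₂ε₃)t²+ε₁ε₂ε₃(2t−s). -/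

import Mathlib

set_option maxHeartbeats 1600000


/-- Along the Hamiltonian circle `t = T(s)` the tangent vector `∂ₛΦ + T'(s)∂ₜΦ` lies in
the kernel of the second fundamental form: `L + 2M T'(s) + N T'(s)² = 0`. -/
theorem stmt10 (ε₁ ε₂ ε₃ s m : ℝ) (h₀ : 0 < ε₁) (h₁₂ : ε₁ < ε₂) (h₂₃ : ε₂ < ε₃)
    (hs : ε₂ < s ∧ s < ε₃) (hm : 0 < m)
    (ht₂ : ε₁ * ε₃ / (ε₁ + ε₃ - s) ≠ ε₂) :
    let t : ℝ := ε₁ * ε₃ / (ε₁ + ε₃ - s)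
    let T' : ℝ := ε₁ * ε₃ / (ε₁ + ε₃ - s) ^ 2
    let PL : ℝ := s ^ 2 * t - 2 * s * t ^ 2 + (ε₁ + ε₂ + ε₃) * t ^ 2
      - (ε₁ * ε₂ + ε₁ * ε₃ + ε₂ * ε₃) * t + ε₁ * ε₂ * ε₃
    let PN : ℝ := -s ^ 2 * t ^ 2 + (ε₁ + ε₂ + ε₃) * s * t ^ 2
      - (ε₁ * ε₂ + ε₁ * ε₃ + ε₂ * ε₃) * t ^ 2 + ε₁ * ε₂ * ε₃ * (2 * t - s)
    let L : ℝ := m * PL / (4 * t * (s - ε₁) * (s - ε₂) * (s - ε₃))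
    let M : ℝ := m / (4 * t)
    let N : ℝ := m * PN / (4 * t ^ 2 * (t - ε₁) * (t - ε₂) * (t - ε₃))
    L + 2 * M * T' + N * T' ^ 2 = 0 := by
  intro t T' PL PN L M N
  obtain ⟨hs2, hs3⟩ := hs
  have hd : 0 < ε₁ + ε₃ - s := by linarith
  have hd' : ε₁ + ε₃ - s ≠ 0 := ne_of_gt hd
  have ht : t = ε₁ * ε₃ / (ε₁ + ε₃ - s) := rfl
  have htpos : 0 < t := by
    rw [ht]; exact div_pos (mul_pos h₀ (by linarith)) hd
  have ht0 : t ≠ 0 := ne_of_gt htpos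
  have ht1 : t - ε₁ ≠ 0 := by
    rw [ht, div_sub' hd']
    refine div_ne_zero ?_ hd'
    intro h; nlinarith
  have ht3 : t - ε₃ ≠ 0 := by
    rw [ht, div_sub' hd']
    refine div_ne_zero ?_ hd'
    intro h; nlinarith
  have ht2 : t - ε₂ ≠ 0 := sub_ne_zero.mpr ht₂
  have hse1 : s - ε₁ ≠ 0 := ne_of_gt (by linarith)
  have hse2 : s - ε₂ ≠ 0 := ne_of_gt (by linarith)
  have hse3 : s - ε₃ ≠ 0 := sub_ne_zero.mpr (ne_of_lt hs3)
  show m * PL / (4 * t * (s - ε₁) * (s - ε₂) * (s - ε₃)) + 2 * (m / (4 * t)) * T'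
      + m * PN / (4 * t ^ 2 * (t - ε₁) * (t - ε₂) * (t - ε₃)) * T' ^ 2 = 0
  have hT' : T' = ε₁ * ε₃ / (ε₁ + ε₃ - s) ^ 2 := rfl
  have hPL : PL = s ^ 2 * t - 2 * s * t ^ 2 + (ε₁ + ε₂ + ε₃) * t ^ 2
      - (ε₁ * ε₂ + ε₁ * ε₃ + ε₂ * ε₃) * t + ε₁ * ε₂ * ε₃ := rfl
  have hPN : PN = -s ^ 2 * t ^ 2 + (ε₁ + ε₂ + ε₃) * s * t ^ 2
      - (ε₁ * ε₂ + ε₁ * ε₃ + ε₂ * ε₃) * t ^ 2 + ε₁ * ε₂ * ε₃ * (2 * t - s) := rfl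
  rw [hPL, hPN, hT', ht]
  have hε1 : ε₁ ≠ 0 := ne_of_gt h₀
  have hε3 : ε₃ ≠ 0 := ne_of_gt (by linarith)
  have hA1 : ε₁ * ε₃ - (ε₁ + ε₃ - s) * ε₁ ≠ 0 := by nlinarith
  have hA3 : ε₁ * ε₃ - (ε₁ + ε₃ - s) * ε₃ ≠ 0 := by nlinarith
  have hA2 : ε₁ * ε₃ - (ε₁ + ε₃ - s) * ε₂ ≠ 0 := by
    intro h
    apply ht₂
    field_simp
    linarith
  rw [ht] at ht0 ht1 ht2 ht3
  have hden1 : (4:ℝ) * (ε₁ * ε₃ / (ε₁ + ε₃ - s)) * (s - ε₁) * (s - ε₂) * (s - ε₃) ≠ 0 :=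
    mul_ne_zero (mul_ne_zero (mul_ne_zero (mul_ne_zero four_ne_zero ht0) hse1) hse2) hse3
  have hden2 : (4:ℝ) * (ε₁ * ε₃ / (ε₁ + ε₃ - s)) ^ 2 * (ε₁ * ε₃ / (ε₁ + ε₃ - s) - ε₁)
      * (ε₁ * ε₃ / (ε₁ + ε₃ - s) - ε₂) * (ε₁ * ε₃ / (ε₁ + ε₃ - s) - ε₃) ≠ 0 :=
    mul_ne_zero (mul_ne_zero (mul_ne_zero (mul_ne_zero four_ne_zero (pow_ne_zero 2 ht0)) ht1) ht2) ht3
  have key1 : m * (s ^ 2 * t - 2 * s * t ^ 2 + (ε₁ + ε₂ + ε₃) * t ^ 2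
      - (ε₁ * ε₂ + ε₁ * ε₃ + ε₂ * ε₃) * t + ε₁ * ε₂ * ε₃)
      / (4 * t * (s - ε₁) * (s - ε₂) * (s - ε₃)) = -(m * t) / (4 * (ε₁ * ε₃)) := by
    rw [ht]
    rw [div_eq_div_iff hden1 (mul_ne_zero four_ne_zero (mul_ne_zero hε1 hε3))]
    field_simp
    ring
  have key2 : m * (-s ^ 2 * t ^ 2 + (ε₁ + ε₂ + ε₃) * s * t ^ 2
      - (ε₁ * ε₂ + ε₁ * ε₃ + ε₂ * ε₃) * t ^ 2 + ε₁ * ε₂ * ε₃ * (2 * t - s))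
      / (4 * t ^ 2 * (t - ε₁) * (t - ε₂) * (t - ε₃)) * (ε₁ * ε₃ / (ε₁ + ε₃ - s) ^ 2) ^ 2
      = -(m * t) / (4 * (ε₁ * ε₃)) := by
    rw [ht]
    rw [div_mul_eq_mul_div, div_eq_div_iff hden2 (mul_ne_zero four_ne_zero (mul_ne_zero hε1 hε3))]
    field_simp
    ring
  rw [key1, key2, ht]
  field_simp
  ring
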